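/- Let r = log 5 / log 2. There exists a constant M > 0 such that for all j ≥ 2, Σ_{ℓ=1}^{j-1} (binomial(j, ℓ))^r ≤ M · 5^j · j^{-1/2}. -/

import Mathlib

open Finset Real

/-- key square bound, by induction -/
lemma central_sq_bound (n : ℕ) :
    ((2 * n).choose n : ℝ) ^ 2 * (3 * n + 1) ≤ 16 ^ n := by
  induction n with
  | zero => norm_num
  | succ n ih =>
    have hrec := Nat.succ_mul_centralBinom_succ n
    simp only [Nat.centralBinom] at hrec
    have hrecR : ((n : ℝ) + 1) * ((2 * (n + 1)).choose (n + 1) : ℝ)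
        = 2 * (2 * n + 1) * ((2 * n).choose n : ℝ) := by
      exact_mod_cast congrArg (Nat.cast : ℕ → ℝ) hrec
    have hn1 : (0 : ℝ) < (n : ℝ) + 1 := by positivity
    set c : ℝ := ((2 * n).choose n : ℝ) with hc
    set c' : ℝ := ((2 * (n + 1)).choose (n + 1) : ℝ) with hc'
    have key : (3 * (n : ℝ) + 1) * (((n : ℝ) + 1) ^ 2 * (c' ^ 2 * (3 * (n + 1) + 1)))
        ≤ (3 * (n : ℝ) + 1) * (((n : ℝ) + 1) ^ 2 * 16 ^ (n + 1)) := by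
      have h1 : ((n : ℝ) + 1) ^ 2 * c' ^ 2 = (2 * (2 * (n : ℝ) + 1)) ^ 2 * c ^ 2 := by
        rw [← mul_pow, hrecR, mul_pow]
      have h2 : c ^ 2 * (3 * n + 1) ≤ 16 ^ n := ih
      have h16 : (0 : ℝ) ≤ (16 : ℝ) ^ n := by positivity
      have hA : (4 * (2 * (n : ℝ) + 1) ^ 2 * (3 * n + 4)) * (c ^ 2 * (3 * n + 1))
          ≤ (4 * (2 * (n : ℝ) + 1) ^ 2 * (3 * n + 4)) * 16 ^ n :=
        mul_le_mul_of_nonneg_left h2 (by positivity)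
      have hcoef : (4 * (2 * (n : ℝ) + 1) ^ 2 * (3 * n + 4)) * (16 : ℝ) ^ n
          ≤ (16 * ((n : ℝ) + 1) ^ 2 * (3 * n + 1)) * 16 ^ n := by
        apply mul_le_mul_of_nonneg_right _ h16
        nlinarith [Nat.cast_nonneg (α := ℝ) n]
      have hEq : (3 * (n : ℝ) + 1) * (((n : ℝ) + 1) ^ 2 * (c' ^ 2 * (3 * ((n : ℝ) + 1) + 1)))
          = 4 * (2 * (n : ℝ) + 1) ^ 2 * (3 * (n : ℝ) + 4) * (c ^ 2 * (3 * (n : ℝ) + 1)) := by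
        linear_combination ((3 * (n : ℝ) + 1) * (3 * (n : ℝ) + 4)) * h1
      have hEq2 : (3 * (n : ℝ) + 1) * (((n : ℝ) + 1) ^ 2 * (16 : ℝ) ^ (n + 1))
          = 16 * ((n : ℝ) + 1) ^ 2 * (3 * (n : ℝ) + 1) * 16 ^ n := by
        rw [pow_succ]; ring
      linarith [hEq, hA, hcoef, hEq2]
    have key2 := (mul_le_mul_iff_right₀ (by positivity : (0:ℝ) < (3*(n:ℝ)+1) * ((n:ℝ)+1)^2)).mp
      (by linarith [key] : (3*(n:ℝ)+1) * ((n:ℝ)+1)^2 * (c' ^ 2 * (3 * ((n:ℝ) + 1) + 1))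
        ≤ (3*(n:ℝ)+1) * ((n:ℝ)+1)^2 * 16 ^ (n + 1))
    push_cast
    push_cast at key2
    linarith [key2]

lemma central_le (j : ℕ) (hj : 1 ≤ j) :
    ((2 * j).choose j : ℝ) ≤ 4 ^ j * (j : ℝ) ^ (-(1/2) : ℝ) := by
  have hjR : (0 : ℝ) < j := by exact_mod_cast hj
  have h1 : ((2 * j).choose j : ℝ) ^ 2 * (j : ℝ) ≤ 16 ^ j := by
    have := central_sq_bound j
    nlinarith [sq_nonneg ((2 * j).choose j : ℝ), hjR]
  have hrw : (j : ℝ) ^ (-(1/2) : ℝ) = 1 / Real.sqrt j := by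
    rw [Real.rpow_neg hjR.le, Real.sqrt_eq_rpow]
    norm_num
  rw [hrw]
  rw [mul_one_div, le_div_iff₀ (Real.sqrt_pos.mpr hjR)]
  have hs : ((2 * j).choose j : ℝ) * Real.sqrt j = Real.sqrt (((2 * j).choose j : ℝ) ^ 2 * j) := by
    rw [Real.sqrt_mul (by positivity), Real.sqrt_sq (by positivity)]
  rw [hs]
  have h16 : (16 : ℝ) ^ j = (4 ^ j) ^ 2 := by
    rw [show (16 : ℝ) = 4 ^ 2 by norm_num, ← pow_mul, ← pow_mul, Nat.mul_comm]
  calc Real.sqrt (((2 * j).choose j : ℝ) ^ 2 * j) ≤ Real.sqrt (16 ^ j) :=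
        Real.sqrt_le_sqrt h1
    _ = 4 ^ j := by rw [h16, Real.sqrt_sq (by positivity)]

lemma sum_sq_le (j : ℕ) :
    ∑ ℓ ∈ Finset.Ico 1 j, (j.choose ℓ) ^ 2 ≤ (2 * j).choose j := by
  have hv : (2 * j).choose j = ∑ k ∈ Finset.range (j + 1), j.choose k * j.choose (j - k) := by
    rw [two_mul, Nat.add_choose_eq, Finset.Nat.sum_antidiagonal_eq_sum_range_succ_mk]
  have hrw : ∑ k ∈ Finset.range (j + 1), j.choose k * j.choose (j - k)
      = ∑ k ∈ Finset.range (j + 1), (j.choose k) ^ 2 := by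
    apply Finset.sum_congr rfl
    intro k hk
    rw [Finset.mem_range] at hk
    rw [Nat.choose_symm (by omega : k ≤ j), sq]
  rw [hv, hrw]
  apply Finset.sum_le_sum_of_subset
  intro x hx
  rw [Finset.mem_Ico] at hx
  rw [Finset.mem_range]
  omega

theorem binom_power_sum_bound :
    ∃ M > 0, ∀ j : ℕ, 2 ≤ j →
      ∑ ℓ ∈ Finset.Ico 1 j, ((j.choose ℓ : ℝ)) ^ (Real.log 5 / Real.log 2)
        ≤ M * 5 ^ j * (j : ℝ) ^ (-(1/2) : ℝ) := by
  refine ⟨1, one_pos, fun j hj => ?_⟩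
  set r : ℝ := Real.log 5 / Real.log 2 with hr
  have h2r : (2 : ℝ) ^ r = 5 := by
    have : r = Real.logb 2 5 := by rw [Real.logb]
    rw [this]
    exact Real.rpow_logb two_pos (by norm_num) (by norm_num)
  have hr2 : (2 : ℝ) ≤ r := by
    rw [hr, le_div_iff₀ (Real.log_pos one_lt_two)]
    have : (2 : ℝ) * Real.log 2 = Real.log 4 := by
      rw [← Real.log_rpow two_pos]; norm_num
    rw [this]
    exact Real.log_le_log (by norm_num) (by norm_num)
  have hjR : (0 : ℝ) < j := by positivity
  -- step 1: each term C^r ≤ C^2 * 2^(j*(r-2))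
  have step1 : ∀ ℓ ∈ Finset.Ico 1 j, ((j.choose ℓ : ℝ)) ^ r
      ≤ ((j.choose ℓ : ℝ)) ^ 2 * (2 : ℝ) ^ ((j : ℝ) * (r - 2)) := by
    intro ℓ hℓ
    rw [Finset.mem_Ico] at hℓ
    have hpos : 0 < j.choose ℓ := Nat.choose_pos (by omega)
    have hcpos : (0 : ℝ) < (j.choose ℓ : ℝ) := by exact_mod_cast hpos
    have hle2 : ((j.choose ℓ : ℝ)) ≤ (2 : ℝ) ^ (j : ℕ) := by
      have h := Finset.single_le_sum (f := fun m => j.choose m)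
        (fun _ _ => Nat.zero_le _) (Finset.mem_range.mpr (by omega : ℓ < j + 1))
      rw [Nat.sum_range_choose] at h
      exact_mod_cast h
    have hsplit : ((j.choose ℓ : ℝ)) ^ r
        = ((j.choose ℓ : ℝ)) ^ (2 : ℝ) * ((j.choose ℓ : ℝ)) ^ (r - 2) := by
      rw [← Real.rpow_add hcpos]; ring_nf
    rw [hsplit]
    have h2 : ((j.choose ℓ : ℝ)) ^ (2 : ℝ) = ((j.choose ℓ : ℝ)) ^ (2 : ℕ) := by
      rw [Real.rpow_two]
    rw [h2]
    apply mul_le_mul_of_nonneg_left _ (by positivity)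
    calc ((j.choose ℓ : ℝ)) ^ (r - 2) ≤ ((2 : ℝ) ^ (j : ℕ)) ^ (r - 2) :=
          Real.rpow_le_rpow hcpos.le hle2 (by linarith)
      _ = (2 : ℝ) ^ ((j : ℝ) * (r - 2)) := by
          rw [← Real.rpow_natCast 2 j, ← Real.rpow_mul (by norm_num)]
  -- combine
  calc ∑ ℓ ∈ Finset.Ico 1 j, ((j.choose ℓ : ℝ)) ^ r
      ≤ ∑ ℓ ∈ Finset.Ico 1 j, ((j.choose ℓ : ℝ)) ^ 2 * (2 : ℝ) ^ ((j : ℝ) * (r - 2)) :=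
        Finset.sum_le_sum step1
    _ = (∑ ℓ ∈ Finset.Ico 1 j, ((j.choose ℓ : ℝ)) ^ 2) * (2 : ℝ) ^ ((j : ℝ) * (r - 2)) := by
        rw [← Finset.sum_mul]
    _ ≤ ((2 * j).choose j : ℝ) * (2 : ℝ) ^ ((j : ℝ) * (r - 2)) := by
        apply mul_le_mul_of_nonneg_right _ (by positivity)
        have := sum_sq_le j
        calc ∑ ℓ ∈ Finset.Ico 1 j, ((j.choose ℓ : ℝ)) ^ 2
            = ((∑ ℓ ∈ Finset.Ico 1 j, (j.choose ℓ) ^ 2 : ℕ) : ℝ) := by push_cast; ring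
          _ ≤ ((2 * j).choose j : ℝ) := by exact_mod_cast this
    _ ≤ (4 ^ j * (j : ℝ) ^ (-(1/2) : ℝ)) * (2 : ℝ) ^ ((j : ℝ) * (r - 2)) := by
        apply mul_le_mul_of_nonneg_right (central_le j (by omega)) (by positivity)
    _ = 1 * 5 ^ j * (j : ℝ) ^ (-(1/2) : ℝ) := by
        have hbase : (2 : ℝ) ^ (r - 2) = 5 / 4 := by
          rw [Real.rpow_sub two_pos, h2r, Real.rpow_two]
          norm_num
        have hpow : (2 : ℝ) ^ ((j : ℝ) * (r - 2)) = 5 ^ j / 4 ^ j := by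
          rw [mul_comm, Real.rpow_mul (by norm_num : (0:ℝ) ≤ 2), hbase,
            Real.rpow_natCast, div_pow]
        rw [hpow]
        have h4 : (4 : ℝ) ^ j ≠ 0 := by positivity
        field_simp
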